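/- Let μ be an ε-product probability measure on V = V₁×⋯×V_k, let S,T ⊆ [k] with S ⊄ T, let f : V → ℝ, and let g : V → ℝ be a T-junta (i.e., g(x) depends only on x_T). Then ⟨f^{=S}, g⟩ ≤ ε·√(|S|·|T|)·2^{|S|}·‖f‖₂·‖g‖₂. -/

import Mathlib

open Finset

namespace GLL

variable {k : ℕ} {V : Fin k → Type} [∀ i, Fintype (V i)] [∀ i, DecidableEq (V i)]

/-- Expectation of `f` with respect to the (finitely supported) measure `μ`. -/
def expect (μ f : (∀ i, V i) → ℝ) : ℝ := ∑ x, μ x * f x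

/-- `μ` is a probability measure. -/
def IsProb (μ : (∀ i, V i) → ℝ) : Prop := (∀ x, 0 ≤ μ x) ∧ ∑ x, μ x = 1

/-- The marginal `μ_S` evaluated at (the `S`-coordinates of) `x`. -/
def marg (μ : (∀ i, V i) → ℝ) (S : Finset (Fin k)) (x : ∀ i, V i) : ℝ :=
  ∑ z, if ∀ i ∈ S, z i = x i then μ z else 0

/-- The link (conditional) measure `μ_x` for `x ∈ V_S`, viewed as a measure on
full points agreeing with `x` on `S`. -/
noncomputable def cond (μ : (∀ i, V i) → ℝ) (S : Finset (Fin k)) (x z : ∀ i, V i) : ℝ :=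
  if ∀ i ∈ S, z i = x i then μ z / marg μ S x else 0

/-- The averaging operator `A_S`: `A_S f (x) = E_{y ∼ μ_{x_S}} [f(x_S, y)]`.
Applied to an `S'`-junta `f`, this is also the operator `A_{S',S}`. -/
noncomputable def Aop (μ : (∀ i, V i) → ℝ) (S : Finset (Fin k)) (f : (∀ i, V i) → ℝ)
    (x : ∀ i, V i) : ℝ :=
  ∑ z, cond μ S x z * f z

/-- The Efron–Stein component `f^{=S} = ∑_{T ⊆ S} (-1)^{|S∖T|} A_T f`. -/
noncomputable def ES (μ : (∀ i, V i) → ℝ) (S : Finset (Fin k)) (f : (∀ i, V i) → ℝ)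
    (x : ∀ i, V i) : ℝ :=
  ∑ T ∈ S.powerset, (-1 : ℝ) ^ (S.card - T.card) * Aop μ T f x

/-- The low-degree part `f^{≤ d} = ∑_{|S| ≤ d} f^{=S}`. -/
noncomputable def lowPart (μ : (∀ i, V i) → ℝ) (d : ℕ) (f : (∀ i, V i) → ℝ)
    (x : ∀ i, V i) : ℝ :=
  ∑ S ∈ univ.powerset.filter (fun S : Finset (Fin k) => S.card ≤ d), ES μ S f x

/-- The Laplacian `L_S[f] = ∑_{T ⊇ S} f^{=T}`. -/
noncomputable def Lap (μ : (∀ i, V i) → ℝ) (S : Finset (Fin k)) (f : (∀ i, V i) → ℝ)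
    (x : ∀ i, V i) : ℝ :=
  ∑ T ∈ univ.powerset.filter (fun T : Finset (Fin k) => S ⊆ T), ES μ T f x

/-- The truncated Laplacian `L_S^{≤d}[f] = ∑_{T ⊇ S, |T| ≤ d} f^{=T}`. -/
noncomputable def LapLe (μ : (∀ i, V i) → ℝ) (d : ℕ) (S : Finset (Fin k))
    (f : (∀ i, V i) → ℝ) (x : ∀ i, V i) : ℝ :=
  ∑ T ∈ univ.powerset.filter (fun T : Finset (Fin k) => S ⊆ T ∧ T.card ≤ d), ES μ T f x

/-- The influence `I_{S,x}[f] = ‖L_S[f](x,·)‖²_{L²(μ_x)}`. -/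
noncomputable def Inf (μ : (∀ i, V i) → ℝ) (S : Finset (Fin k)) (f : (∀ i, V i) → ℝ)
    (x : ∀ i, V i) : ℝ :=
  ∑ z, cond μ S x z * (Lap μ S f z) ^ 2

/-- The truncated influence `I^{≤d}_{S,x}[f] = ‖L_S^{≤d}[f](x,·)‖²_{L²(μ_x)}`. -/
noncomputable def InfLe (μ : (∀ i, V i) → ℝ) (d : ℕ) (S : Finset (Fin k))
    (f : (∀ i, V i) → ℝ) (x : ∀ i, V i) : ℝ :=
  ∑ z, cond μ S x z * (LapLe μ d S f z) ^ 2

/-- `‖f‖₂²` with respect to `μ`. -/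
def normSq (μ f : (∀ i, V i) → ℝ) : ℝ := ∑ x, μ x * (f x) ^ 2

/-- `‖f‖₄⁴` with respect to `μ`. -/
def norm4p4 (μ f : (∀ i, V i) → ℝ) : ℝ := ∑ x, μ x * (f x) ^ 4

/-- `‖f‖₂` with respect to `μ`. -/
noncomputable def l2norm (μ f : (∀ i, V i) → ℝ) : ℝ := Real.sqrt (normSq μ f)

/-- `‖f‖_∞`: the maximum of `|f|` over the support of `μ`. -/
noncomputable def supNorm (μ f : (∀ i, V i) → ℝ) : ℝ :=
  sSup ((fun x => |f x|) '' {x | 0 < μ x})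

/-- Inner product `⟨f, g⟩ = E_{x∼μ}[f(x) g(x)]`. -/
def inner' (μ f g : (∀ i, V i) → ℝ) : ℝ := ∑ x, μ x * (f x * g x)

/-- The pair `{i,j}`-skeleton of `μ` is `ε`-pseudorandom. -/
def PairPseudo (μ : (∀ i, V i) → ℝ) (ε : ℝ) (i j : Fin k) : Prop :=
  ∀ (f₁ : V i → ℝ) (f₂ : V j → ℝ),
    |expect μ (fun x => f₁ (x i) * f₂ (x j)) -
        expect μ (fun x => f₁ (x i)) * expect μ (fun x => f₂ (x j))| ≤
      ε * Real.sqrt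
        ((expect μ (fun x => f₁ (x i) ^ 2) - expect μ (fun x => f₁ (x i)) ^ 2) *
          (expect μ (fun x => f₂ (x j) ^ 2) - expect μ (fun x => f₂ (x j)) ^ 2))

/-- `μ` is an `ε`-product measure: every link of every restriction of size `≤ k - 2`
has `ε`-pseudorandom skeletons. -/
def EpsProduct (μ : (∀ i, V i) → ℝ) (ε : ℝ) : Prop :=
  ∀ S : Finset (Fin k), S.card ≤ k - 2 → ∀ x, 0 < marg μ S x →
    ∀ i j : Fin k, i ∉ S → j ∉ S → i ≠ j → PairPseudo (cond μ S x) ε i j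

/-- `‖f(x,·)‖_{L²(μ_x)}` for `x ∈ V_S`. -/
noncomputable def restrictNorm (μ : (∀ i, V i) → ℝ) (S : Finset (Fin k)) (x : ∀ i, V i)
    (f : (∀ i, V i) → ℝ) : ℝ :=
  Real.sqrt (∑ z, cond μ S x z * (f z) ^ 2)

/-- `f` is `(d, δ)`-global: all restrictions of at most `d` coordinates have
`2`-norm at most `δ`. -/
def IsGlobal (μ : (∀ i, V i) → ℝ) (d : ℕ) (δ : ℝ) (f : (∀ i, V i) → ℝ) : Prop :=
  ∀ S : Finset (Fin k), S.card ≤ d → ∀ x, 0 < marg μ S x → restrictNorm μ S x f ≤ δ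

/-- `f` is an `S`-junta: it depends only on the coordinates in `S`. -/
def Junta (S : Finset (Fin k)) (f : (∀ i, V i) → ℝ) : Prop :=
  ∀ x y, (∀ i ∈ S, x i = y i) → f x = f y

/-- The noise operator `T_ρ f = ∑_{S ⊆ [k]} ρ^{|S|} (1-ρ)^{k-|S|} A_S f`. -/
noncomputable def noiseOp (μ : (∀ i, V i) → ℝ) (ρ : ℝ) (f : (∀ i, V i) → ℝ)
    (x : ∀ i, V i) : ℝ :=
  ∑ S ∈ (univ : Finset (Fin k)).powerset, ρ ^ S.card * (1 - ρ) ^ (k - S.card) * Aop μ S f x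

/-- The up-down walk operator `T = (1/k) ∑_{i=1}^k A_{[k]∖{i}}`. -/
noncomputable def upDown (μ : (∀ i, V i) → ℝ) (f : (∀ i, V i) → ℝ) (x : ∀ i, V i) : ℝ :=
  (1 / (k : ℝ)) * ∑ i : Fin k, Aop μ (univ.erase i) f x

/-- The product measure `μ₁ ⊗ ⋯ ⊗ μ_k`. -/
def prodMeasure (μi : ∀ i, V i → ℝ) : (∀ i, V i) → ℝ := fun x => ∏ i, μi i (x i)

/-- `f` has degree at most `d`: `f^{=S} = 0` whenever `|S| > d`. -/
def DegLe (μ : (∀ i, V i) → ℝ) (d : ℕ) (f : (∀ i, V i) → ℝ) : Prop :=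
  ∀ S : Finset (Fin k), d < S.card → ∀ x, ES μ S f x = 0

/-- `{F S}_{S ⊆ [k]}` is an `(α, ε')`-approximate Efron–Stein decomposition of `f`. -/
noncomputable def ApproxES (μ : (∀ i, V i) → ℝ) (α ε' : ℝ) (f : (∀ i, V i) → ℝ)
    (F : Finset (Fin k) → (∀ i, V i) → ℝ) : Prop :=
  l2norm μ f ≤ α ∧
    l2norm μ (fun x => f x - ∑ S ∈ (univ : Finset (Fin k)).powerset, F S x) ≤ ε' ∧
    ∀ S : Finset (Fin k), ∃ h : (∀ i, V i) → ℝ,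
      l2norm μ h ≤ α ∧ l2norm μ (fun x => ES μ S h x - F S x) ≤ ε'

section Lemmas

variable {μ : (∀ i, V i) → ℝ} {ε : ℝ}

lemma marg_nonneg (hμ0 : ∀ x, 0 ≤ μ x) (S : Finset (Fin k)) (x : ∀ i, V i) :
    0 ≤ marg μ S x := by
  refine Finset.sum_nonneg fun z _ => ?_
  split <;> [exact hμ0 z; exact le_rfl]

lemma marg_congr {S : Finset (Fin k)} {x y : ∀ i, V i} (h : ∀ i ∈ S, x i = y i) :
    marg μ S x = marg μ S y := by
  refine Finset.sum_congr rfl fun z _ => ?_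
  refine if_congr ?_ rfl rfl
  constructor
  · intro hz i hi; rw [hz i hi, h i hi]
  · intro hz i hi; rw [hz i hi, h i hi]

lemma le_marg (hμ0 : ∀ x, 0 ≤ μ x) {S : Finset (Fin k)} {x z : ∀ i, V i}
    (hz : ∀ i ∈ S, z i = x i) : μ z ≤ marg μ S x := by
  have h1 : μ z = (fun w => if ∀ i ∈ S, w i = x i then μ w else 0) z := by
    simp only [if_pos hz]
  rw [h1, marg]
  refine Finset.single_le_sum (f := fun w => if ∀ i ∈ S, w i = x i then μ w else 0)
    (fun w _ => by split <;> [exact hμ0 w; exact le_rfl]) (Finset.mem_univ z)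

lemma cond_nonneg (hμ0 : ∀ x, 0 ≤ μ x) (S : Finset (Fin k)) (x z : ∀ i, V i) :
    0 ≤ cond μ S x z := by
  unfold cond; split
  · exact div_nonneg (hμ0 z) (marg_nonneg hμ0 S x)
  · exact le_rfl

lemma sum_cond (hpos : marg μ S x ≠ 0) : ∑ z, cond μ S x z = 1 := by
  have : ∀ z, cond μ S x z = (if ∀ i ∈ S, z i = x i then μ z else 0) / marg μ S x := by
    intro z; unfold cond; split <;> simp
  rw [Finset.sum_congr rfl fun z _ => this z, ← Finset.sum_div]
  rw [show (∑ z, if ∀ i ∈ S, z i = x i then μ z else 0) = marg μ S x from rfl]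
  exact div_self hpos

lemma mu_ne_zero_of_cond {S : Finset (Fin k)} {x z : ∀ i, V i} (h : cond μ S x z ≠ 0) :
    μ z ≠ 0 := by
  unfold cond at h
  intro h0
  apply h
  split <;> simp [h0]

lemma agree_of_cond {S : Finset (Fin k)} {x z : ∀ i, V i} (h : cond μ S x z ≠ 0) :
    ∀ i ∈ S, z i = x i := by
  by_contra hc
  exact h (by unfold cond; rw [if_neg hc])

lemma mul_cond_symm (hμ0 : ∀ x, 0 ≤ μ x) (S : Finset (Fin k)) (x z : ∀ i, V i) :
    μ x * cond μ S x z = μ z * cond μ S z x := by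
  unfold cond
  by_cases h : ∀ i ∈ S, z i = x i
  · rw [if_pos h, if_pos fun i hi => (h i hi).symm,
      marg_congr (fun i hi => (h i hi).symm)]
    ring
  · rw [if_neg h, if_neg fun hc => h fun i hi => (hc i hi).symm]
    simp

lemma sum_mul_cond (hμ0 : ∀ x, 0 ≤ μ x) (S : Finset (Fin k)) (z : ∀ i, V i) :
    ∑ x, μ x * cond μ S x z = μ z := by
  rw [Finset.sum_congr rfl fun x _ => mul_cond_symm hμ0 S x z, ← Finset.mul_sum]
  by_cases h : marg μ S z = 0
  · have : μ z = 0 := le_antisymm (h ▸ le_marg hμ0 fun i _ => rfl) (hμ0 z)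
    simp [this]
  · rw [sum_cond h, mul_one]

end Lemmas
section Lemmas2

variable {μ : (∀ i, V i) → ℝ}

lemma cond_tower (hμ0 : ∀ x, 0 ≤ μ x) {Q P : Finset (Fin k)} (hQP : Q ⊆ P)
    (x w : ∀ i, V i) : ∑ z, cond μ Q x z * cond μ P z w = cond μ Q x w := by
  have key : ∀ z, cond μ Q x z * cond μ P z w =
      (if ∀ i ∈ P, w i = z i then cond μ Q x z else 0) * (μ w / marg μ P w) := by
    intro z
    unfold cond
    by_cases h : ∀ i ∈ P, w i = z i
    · rw [if_pos h, if_pos h, marg_congr fun i hi => (h i hi).symm]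
    · rw [if_neg h, if_neg h, mul_zero, zero_mul]
  rw [Finset.sum_congr rfl fun z _ => key z, ← Finset.sum_mul]
  by_cases hxw : ∀ i ∈ Q, w i = x i
  · have inner_eq : ∀ z, (if ∀ i ∈ P, w i = z i then cond μ Q x z else 0) =
        (if ∀ i ∈ P, z i = w i then μ z else 0) / marg μ Q x := by
      intro z
      by_cases h : ∀ i ∈ P, w i = z i
      · rw [if_pos h, if_pos fun i hi => (h i hi).symm]
        unfold cond
        rw [if_pos fun i hi => by rw [← h i (hQP hi), hxw i hi]]
      · rw [if_neg h, if_neg fun hc => h fun i hi => (hc i hi).symm, zero_div]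
    rw [Finset.sum_congr rfl fun z _ => inner_eq z, ← Finset.sum_div]
    rw [show (∑ z, if ∀ i ∈ P, z i = w i then μ z else 0) = marg μ P w from rfl]
    unfold cond
    rw [if_pos hxw]
    by_cases hm : marg μ P w = 0
    · have : μ w = 0 := le_antisymm (hm ▸ le_marg hμ0 fun i _ => rfl) (hμ0 w)
      simp [this, hm]
    · calc marg μ P w / marg μ Q x * (μ w / marg μ P w)
          = (marg μ P w / marg μ P w) * (μ w / marg μ Q x) := by ring
        _ = μ w / marg μ Q x := by rw [div_self hm, one_mul]
  · have inner_zero : ∀ z, (if ∀ i ∈ P, w i = z i then cond μ Q x z else 0) = 0 := by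
      intro z
      by_cases h : ∀ i ∈ P, w i = z i
      · rw [if_pos h]
        unfold cond
        rw [if_neg fun hc => hxw fun i hi => by rw [h i (hQP hi), hc i hi]]
      · rw [if_neg h]
    rw [Finset.sum_congr rfl fun z _ => inner_zero z]
    unfold cond
    rw [if_neg hxw]
    simp

lemma Aop_split (hμ0 : ∀ x, 0 ≤ μ x) {Q P : Finset (Fin k)} (hQP : Q ⊆ P)
    (F : (∀ i, V i) → ℝ) (x : ∀ i, V i) :
    Aop μ Q F x = ∑ y, cond μ Q x y * Aop μ P F y := by
  unfold Aop
  simp only [Finset.mul_sum]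
  rw [Finset.sum_comm]
  refine Finset.sum_congr rfl fun z _ => ?_
  have l : ∀ y, cond μ Q x y * (cond μ P y z * F z)
      = cond μ Q x y * cond μ P y z * F z := fun y => by ring
  rw [Finset.sum_congr rfl fun y _ => l y, ← Finset.sum_mul, cond_tower hμ0 hQP]

lemma Aop_tower (hμ0 : ∀ x, 0 ≤ μ x) {Q P : Finset (Fin k)} (hQP : Q ⊆ P)
    (F : (∀ i, V i) → ℝ) (x : ∀ i, V i) :
    Aop μ Q (Aop μ P F) x = Aop μ Q F x := by
  rw [Aop_split hμ0 hQP F x]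
  rfl

lemma junta_mono {S S' : Finset (Fin k)} (h : S ⊆ S') {f : (∀ i, V i) → ℝ}
    (hf : Junta S f) : Junta S' f :=
  fun x y hxy => hf x y fun i hi => hxy i (h hi)

lemma Aop_junta (Q : Finset (Fin k)) (F : (∀ i, V i) → ℝ) : Junta Q (Aop μ Q F) := by
  intro x y hxy
  unfold Aop
  refine Finset.sum_congr rfl fun z _ => ?_
  unfold cond
  rw [marg_congr hxy]
  refine congrArg (· * F z) (if_congr ?_ rfl rfl)
  constructor
  · intro hz i hi; rw [hz i hi, hxy i hi]
  · intro hz i hi; rw [hz i hi, ← hxy i hi]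

lemma Junta.sub' {S : Finset (Fin k)} {f g : (∀ i, V i) → ℝ} (hf : Junta S f)
    (hg : Junta S g) : Junta S (fun z => f z - g z) := fun x y h => by
  show f x - g x = f y - g y
  rw [hf x y h, hg x y h]

lemma Aop_mul_junta {P : Finset (Fin k)} {u : (∀ i, V i) → ℝ} (hu : Junta P u)
    (v : (∀ i, V i) → ℝ) (y : ∀ i, V i) :
    Aop μ P (fun z => u z * v z) y = u y * Aop μ P v y := by
  unfold Aop
  rw [Finset.mul_sum]
  refine Finset.sum_congr rfl fun z _ => ?_
  show cond μ P y z * (u z * v z) = u y * (cond μ P y z * v z)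
  by_cases h : cond μ P y z = 0
  · rw [h]; ring
  · rw [hu z y (agree_of_cond h)]; ring

lemma Aop_eq_of_junta {P : Finset (Fin k)} {g : (∀ i, V i) → ℝ} (hg : Junta P g)
    {x : ∀ i, V i} (h : marg μ P x ≠ 0) : Aop μ P g x = g x := by
  have h1 : Aop μ P (fun z => g z * 1) x = g x * Aop μ P (fun _ => 1) x :=
    Aop_mul_junta hg _ x
  simp only [mul_one] at h1
  rw [h1]
  have h2 : Aop μ P (fun _ => 1) x = 1 := by
    unfold Aop; simp only [mul_one]; exact sum_cond h
  rw [h2, mul_one]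

lemma Aop_add (Q : Finset (Fin k)) (u v : (∀ i, V i) → ℝ) (x : ∀ i, V i) :
    Aop μ Q (fun z => u z + v z) x = Aop μ Q u x + Aop μ Q v x := by
  unfold Aop
  rw [← Finset.sum_add_distrib]
  exact Finset.sum_congr rfl fun z _ => by ring

lemma Aop_sub (Q : Finset (Fin k)) (u v : (∀ i, V i) → ℝ) (x : ∀ i, V i) :
    Aop μ Q (fun z => u z - v z) x = Aop μ Q u x - Aop μ Q v x := by
  unfold Aop
  rw [← Finset.sum_sub_distrib]
  exact Finset.sum_congr rfl fun z _ => by ring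

lemma Aop_congr_support {Q : Finset (Fin k)} {x : ∀ i, V i} {F G : (∀ i, V i) → ℝ}
    (h : ∀ z, cond μ Q x z ≠ 0 → F z = G z) : Aop μ Q F x = Aop μ Q G x := by
  unfold Aop
  refine Finset.sum_congr rfl fun z _ => ?_
  by_cases hz : cond μ Q x z = 0
  · rw [hz, zero_mul, zero_mul]
  · rw [h z hz]

lemma Aop_sq_nonneg (hμ0 : ∀ x, 0 ≤ μ x) (Q : Finset (Fin k)) (u : (∀ i, V i) → ℝ)
    (x : ∀ i, V i) : 0 ≤ Aop μ Q (fun z => u z ^ 2) x :=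
  Finset.sum_nonneg fun z _ => mul_nonneg (cond_nonneg hμ0 Q x z) (sq_nonneg _)

lemma sum_mu_Aop (hμ0 : ∀ x, 0 ≤ μ x) (Q : Finset (Fin k)) (F : (∀ i, V i) → ℝ) :
    ∑ x, μ x * Aop μ Q F x = ∑ z, μ z * F z := by
  unfold Aop
  simp only [Finset.mul_sum]
  rw [Finset.sum_comm]
  refine Finset.sum_congr rfl fun z _ => ?_
  have l : ∀ x, μ x * (cond μ Q x z * F z) = μ x * cond μ Q x z * F z := fun x => by ring
  rw [Finset.sum_congr rfl fun x _ => l x, ← Finset.sum_mul, sum_mul_cond hμ0]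

lemma inner'_adjoint (hμ0 : ∀ x, 0 ≤ μ x) (Q : Finset (Fin k))
    (u v : (∀ i, V i) → ℝ) : inner' μ (Aop μ Q u) v = inner' μ u (Aop μ Q v) := by
  unfold inner' Aop
  have l : ∀ x, μ x * ((∑ z, cond μ Q x z * u z) * v x)
      = ∑ z, μ x * cond μ Q x z * (u z * v x) := by
    intro x
    rw [Finset.sum_mul, Finset.mul_sum]
    exact Finset.sum_congr rfl fun z _ => by ring
  have r : ∀ z, μ z * (u z * ∑ x, cond μ Q z x * v x)
      = ∑ x, μ z * cond μ Q z x * (u z * v x) := by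
    intro z
    simp only [Finset.mul_sum]
    exact Finset.sum_congr rfl fun x _ => by ring
  rw [Finset.sum_congr rfl fun x _ => l x, Finset.sum_congr rfl fun z _ => r z,
    Finset.sum_comm]
  exact Finset.sum_congr rfl fun z _ => Finset.sum_congr rfl fun x _ => by
    rw [mul_cond_symm hμ0]

end Lemmas2
section Lemmas3

lemma helper_cs {ι : Type*} [Fintype ι] (w u v : ι → ℝ) (hw : ∀ i, 0 ≤ w i) :
    |∑ i, w i * (u i * v i)| ≤
      Real.sqrt (∑ i, w i * u i ^ 2) * Real.sqrt (∑ i, w i * v i ^ 2) := by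
  have key := Finset.sum_mul_sq_le_sq_mul_sq Finset.univ
    (fun i => Real.sqrt (w i) * u i) (fun i => Real.sqrt (w i) * v i)
  have e1 : ∀ i : ι, (Real.sqrt (w i) * u i) * (Real.sqrt (w i) * v i)
      = w i * (u i * v i) := by
    intro i
    have : Real.sqrt (w i) * Real.sqrt (w i) = w i := Real.mul_self_sqrt (hw i)
    calc (Real.sqrt (w i) * u i) * (Real.sqrt (w i) * v i)
        = (Real.sqrt (w i) * Real.sqrt (w i)) * (u i * v i) := by ring
      _ = w i * (u i * v i) := by rw [this]
  have e2 : ∀ i : ι, (Real.sqrt (w i) * u i) ^ 2 = w i * u i ^ 2 := by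
    intro i
    rw [mul_pow, Real.sq_sqrt (hw i)]
  have e3 : ∀ i : ι, (Real.sqrt (w i) * v i) ^ 2 = w i * v i ^ 2 := by
    intro i
    rw [mul_pow, Real.sq_sqrt (hw i)]
  rw [Finset.sum_congr rfl fun i _ => e1 i, Finset.sum_congr rfl fun i _ => e2 i,
    Finset.sum_congr rfl fun i _ => e3 i] at key
  have h1 : 0 ≤ ∑ i, w i * u i ^ 2 :=
    Finset.sum_nonneg fun i _ => mul_nonneg (hw i) (sq_nonneg _)
  calc |∑ i, w i * (u i * v i)| = Real.sqrt ((∑ i, w i * (u i * v i)) ^ 2) :=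
        (Real.sqrt_sq_eq_abs _).symm
    _ ≤ Real.sqrt ((∑ i, w i * u i ^ 2) * (∑ i, w i * v i ^ 2)) :=
        Real.sqrt_le_sqrt key
    _ = _ := Real.sqrt_mul h1 _

lemma helper_cs_sqrt {ι : Type*} [Fintype ι] (w a b : ι → ℝ) (hw : ∀ i, 0 ≤ w i)
    (ha : ∀ i, 0 ≤ a i) (hb : ∀ i, 0 ≤ b i) :
    ∑ i, w i * (Real.sqrt (a i) * Real.sqrt (b i)) ≤
      Real.sqrt (∑ i, w i * a i) * Real.sqrt (∑ i, w i * b i) := by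
  have key := helper_cs w (fun i => Real.sqrt (a i)) (fun i => Real.sqrt (b i)) hw
  simp only [Real.sq_sqrt (ha _), Real.sq_sqrt (hb _)] at key
  exact le_trans (le_abs_self _) key

lemma helper_var_nonneg {ι : Type*} [Fintype ι] (w u : ι → ℝ) (hw : ∀ i, 0 ≤ w i)
    (hw1 : ∑ i, w i = 1) : (∑ i, w i * u i) ^ 2 ≤ ∑ i, w i * u i ^ 2 := by
  have key := helper_cs w u (fun _ => 1) hw
  simp only [mul_one, one_pow, hw1] at key
  have h1 : 0 ≤ ∑ i, w i * u i ^ 2 :=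
    Finset.sum_nonneg fun i _ => mul_nonneg (hw i) (sq_nonneg _)
  calc (∑ i, w i * u i) ^ 2 = |∑ i, w i * u i| ^ 2 := (sq_abs _).symm
    _ ≤ (Real.sqrt (∑ i, w i * u i ^ 2) * Real.sqrt 1) ^ 2 :=
        pow_le_pow_left₀ (abs_nonneg _) key 2
    _ = ∑ i, w i * u i ^ 2 := by
        rw [Real.sqrt_one, mul_one, Real.sq_sqrt h1]

lemma helper_two {a b c d : ℝ} (ha : 0 ≤ a) (hb : 0 ≤ b) (hc : 0 ≤ c) (hd : 0 ≤ d) :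
    a * c + b * d ≤ Real.sqrt (a ^ 2 + b ^ 2) * Real.sqrt (c ^ 2 + d ^ 2) := by
  have h1 : 0 ≤ a ^ 2 + b ^ 2 := by positivity
  have h2 : 0 ≤ c ^ 2 + d ^ 2 := by positivity
  have e1 := Real.sq_sqrt h1
  have e2 := Real.sq_sqrt h2
  have s1 := Real.sqrt_nonneg (a ^ 2 + b ^ 2)
  have s2 := Real.sqrt_nonneg (c ^ 2 + d ^ 2)
  nlinarith [sq_nonneg (a * d - b * c), sq_nonneg (Real.sqrt (a^2+b^2) * Real.sqrt (c^2+d^2) - a*c - b*d), mul_nonneg s1 s2, mul_nonneg (mul_nonneg ha hc) (mul_nonneg hb hd)]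

end Lemmas3
section Lemmas4

variable {μ : (∀ i, V i) → ℝ} {ε : ℝ}

lemma expect_eq_Aop (P : Finset (Fin k)) (F : (∀ i, V i) → ℝ) (y : ∀ i, V i) :
    expect (cond μ P y) F = Aop μ P F y := rfl

lemma card_le_of_two_not_mem {P : Finset (Fin k)} {i j : Fin k} (hi : i ∉ P)
    (hj : j ∉ P) (hij : i ≠ j) : P.card ≤ k - 2 := by
  have hsub : P ⊆ (univ.erase i).erase j := by
    intro l hl
    exact Finset.mem_erase.2 ⟨fun h => hj (h ▸ hl),
      Finset.mem_erase.2 ⟨fun h => hi (h ▸ hl), Finset.mem_univ l⟩⟩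
  have hcard := Finset.card_le_card hsub
  have h1 : j ∈ univ.erase i := Finset.mem_erase.2 ⟨hij.symm, Finset.mem_univ j⟩
  rw [Finset.card_erase_of_mem h1, Finset.card_erase_of_mem (Finset.mem_univ i),
    Finset.card_univ, Fintype.card_fin] at hcard
  omega

lemma step_pr (hμ : IsProb μ) (hε : 0 ≤ ε) (hprod : EpsProduct μ ε)
    {P Q : Finset (Fin k)} {i j : Fin k} (hQP : Q ⊆ P) (hi : i ∉ P) (hj : j ∉ P)
    (hij : i ≠ j) {φ ψ : (∀ i, V i) → ℝ} (hφ : Junta (insert i P) φ)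
    (hψ : Junta (insert j P) ψ) (hψ0 : ∀ y, Aop μ P ψ y = 0) (x : ∀ i, V i) :
    |Aop μ Q (fun z => φ z * ψ z) x| ≤
      ε * Real.sqrt (Aop μ Q (fun z => φ z ^ 2) x) *
        Real.sqrt (Aop μ Q (fun z => ψ z ^ 2) x) := by
  obtain ⟨hμ0, -⟩ := hμ
  -- per-y bound
  have pery : ∀ y, |Aop μ P (fun z => φ z * ψ z) y| ≤
      ε * Real.sqrt (Aop μ P (fun z => φ z ^ 2) y * Aop μ P (fun z => ψ z ^ 2) y) := by
    intro y
    by_cases hm : marg μ P y = 0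
    · have hz : ∀ z, cond μ P y z = 0 := by
        intro z; unfold cond; rw [hm]; split <;> simp
      have hA : ∀ G : (∀ i, V i) → ℝ, Aop μ P G y = 0 := by
        intro G; unfold Aop
        exact Finset.sum_eq_zero fun z _ => by rw [hz z, zero_mul]
      rw [hA, hA, hA, abs_zero, zero_mul, Real.sqrt_zero, mul_zero]
    · have hmpos : 0 < marg μ P y :=
        lt_of_le_of_ne (marg_nonneg hμ0 P y) (Ne.symm hm)
      have hPR := hprod P (card_le_of_two_not_mem hi hj hij) y hmpos i j hi hj hij
      set f₁ : V i → ℝ := fun a => φ (Function.update y i a) with hf₁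
      set f₂ : V j → ℝ := fun b => ψ (Function.update y j b) with hf₂
      have key := hPR f₁ f₂
      -- translate expectations
      have supp : ∀ z, cond μ P y z ≠ 0 → ∀ l ∈ P, z l = y l := fun z h => agree_of_cond h
      have eφ : ∀ z, cond μ P y z ≠ 0 → φ z = f₁ (z i) := by
        intro z h
        refine hφ z (Function.update y i (z i)) fun l hl => ?_
        rcases Finset.mem_insert.1 hl with rfl | hl
        · rw [Function.update_self]
        · rw [Function.update_of_ne (fun hli => hi (by rw [← hli]; exact hl)) _ y]
          exact supp z h l hl
      have eψ : ∀ z, cond μ P y z ≠ 0 → ψ z = f₂ (z j) := by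
        intro z h
        refine hψ z (Function.update y j (z j)) fun l hl => ?_
        rcases Finset.mem_insert.1 hl with rfl | hl
        · rw [Function.update_self]
        · rw [Function.update_of_ne (fun hlj => hj (by rw [← hlj]; exact hl)) _ y]
          exact supp z h l hl
      have cgr : ∀ (F G : (∀ i, V i) → ℝ), (∀ z, cond μ P y z ≠ 0 → F z = G z) →
          expect (cond μ P y) F = expect (cond μ P y) G := by
        intro F G h
        unfold expect
        refine Finset.sum_congr rfl fun z _ => ?_
        by_cases hz : cond μ P y z = 0
        · rw [hz, zero_mul, zero_mul]
        · rw [h z hz]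
      have e1 : expect (cond μ P y) (fun z => f₁ (z i) * f₂ (z j))
          = Aop μ P (fun z => φ z * ψ z) y := by
        rw [← expect_eq_Aop]
        exact cgr _ _ fun z h => by rw [eφ z h, eψ z h]
      have e2 : expect (cond μ P y) (fun z => f₁ (z i)) = Aop μ P φ y := by
        rw [← expect_eq_Aop]
        exact cgr _ _ fun z h => (eφ z h).symm
      have e3 : expect (cond μ P y) (fun z => f₂ (z j)) = Aop μ P ψ y := by
        rw [← expect_eq_Aop]
        exact cgr _ _ fun z h => (eψ z h).symm
      have e4 : expect (cond μ P y) (fun z => f₁ (z i) ^ 2)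
          = Aop μ P (fun z => φ z ^ 2) y := by
        rw [← expect_eq_Aop]
        exact cgr _ _ fun z h => by rw [eφ z h]
      have e5 : expect (cond μ P y) (fun z => f₂ (z j) ^ 2)
          = Aop μ P (fun z => ψ z ^ 2) y := by
        rw [← expect_eq_Aop]
        exact cgr _ _ fun z h => by rw [eψ z h]
      rw [e1, e2, e3, e4, e5, hψ0 y, mul_zero, sub_zero] at key
      -- variance bounds
      have hcnn : ∀ z, 0 ≤ cond μ P y z := cond_nonneg hμ0 P y
      have hc1 : ∑ z, cond μ P y z = 1 := sum_cond hm
      have var1 : (Aop μ P φ y) ^ 2 ≤ Aop μ P (fun z => φ z ^ 2) y := by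
        have := helper_var_nonneg (cond μ P y) φ hcnn hc1
        unfold Aop
        convert this using 2
      have var2 : (Aop μ P ψ y) ^ 2 ≤ Aop μ P (fun z => ψ z ^ 2) y := by
        have := helper_var_nonneg (cond μ P y) ψ hcnn hc1
        unfold Aop
        convert this using 2
      refine key.trans ?_
      have hb1 : Aop μ P (fun z => φ z ^ 2) y - Aop μ P φ y ^ 2
          ≤ Aop μ P (fun z => φ z ^ 2) y := by
        have := sq_nonneg (Aop μ P φ y); linarith
      have hb2 : Aop μ P (fun z => ψ z ^ 2) y - Aop μ P ψ y ^ 2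
          ≤ Aop μ P (fun z => ψ z ^ 2) y := by
        have := sq_nonneg (Aop μ P ψ y); linarith
      refine mul_le_mul_of_nonneg_left (Real.sqrt_le_sqrt ?_) hε
      rw [(by norm_num : ((0:ℝ))^2 = 0), sub_zero]
      exact mul_le_mul_of_nonneg_right hb1 (Aop_sq_nonneg hμ0 P ψ y)
  -- combine over y
  rw [Aop_split hμ0 hQP (fun z => φ z * ψ z) x]
  calc |∑ y, cond μ Q x y * Aop μ P (fun z => φ z * ψ z) y|
      ≤ ∑ y, |cond μ Q x y * Aop μ P (fun z => φ z * ψ z) y| :=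
        Finset.abs_sum_le_sum_abs _ _
    _ ≤ ∑ y, cond μ Q x y * (ε * (Real.sqrt (Aop μ P (fun z => φ z ^ 2) y) *
          Real.sqrt (Aop μ P (fun z => ψ z ^ 2) y))) := by
        refine Finset.sum_le_sum fun y _ => ?_
        rw [abs_mul, abs_of_nonneg (cond_nonneg hμ0 Q x y)]
        refine mul_le_mul_of_nonneg_left ?_ (cond_nonneg hμ0 Q x y)
        refine (pery y).trans (le_of_eq ?_)
        rw [Real.sqrt_mul (Aop_sq_nonneg hμ0 P φ y)]
    _ = ε * ∑ y, cond μ Q x y * (Real.sqrt (Aop μ P (fun z => φ z ^ 2) y) *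
          Real.sqrt (Aop μ P (fun z => ψ z ^ 2) y)) := by
        rw [Finset.mul_sum]
        exact Finset.sum_congr rfl fun y _ => by ring
    _ ≤ ε * (Real.sqrt (∑ y, cond μ Q x y * Aop μ P (fun z => φ z ^ 2) y) *
          Real.sqrt (∑ y, cond μ Q x y * Aop μ P (fun z => ψ z ^ 2) y)) := by
        refine mul_le_mul_of_nonneg_left ?_ hε
        exact helper_cs_sqrt _ _ _ (cond_nonneg hμ0 Q x)
          (fun y => Aop_sq_nonneg hμ0 P φ y) (fun y => Aop_sq_nonneg hμ0 P ψ y)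
    _ = ε * Real.sqrt (Aop μ Q (fun z => φ z ^ 2) x) *
          Real.sqrt (Aop μ Q (fun z => ψ z ^ 2) x) := by
        rw [← Aop_split hμ0 hQP (fun z => φ z ^ 2) x,
          ← Aop_split hμ0 hQP (fun z => ψ z ^ 2) x, mul_assoc]

end Lemmas4
section Lemmas5

variable {μ : (∀ i, V i) → ℝ} {ε : ℝ}

lemma Aop_smul (Q : Finset (Fin k)) (c : ℝ) (u : (∀ i, V i) → ℝ) (x : ∀ i, V i) :
    Aop μ Q (fun z => c * u z) x = c * Aop μ Q u x := by
  unfold Aop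
  rw [Finset.mul_sum]
  exact Finset.sum_congr rfl fun z _ => by ring

lemma Aop_cross_zero (hμ0 : ∀ x, 0 ≤ μ x) {Q P : Finset (Fin k)} (hQP : Q ⊆ P)
    {u v : (∀ i, V i) → ℝ} (hu : Junta P u) (hv : ∀ y, Aop μ P v y = 0)
    (x : ∀ i, V i) : Aop μ Q (fun z => u z * v z) x = 0 := by
  rw [Aop_split hμ0 hQP]
  refine Finset.sum_eq_zero fun y _ => ?_
  rw [Aop_mul_junta hu v y, hv y, mul_zero, mul_zero]

lemma inner_tel (hμ : IsProb μ) (hε : 0 ≤ ε) (hprod : EpsProduct μ ε)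
    {Q T : Finset (Fin k)} {i : Fin k} (hiQ : i ∉ Q) (hiT : i ∉ T)
    {h g : (∀ i, V i) → ℝ} (hh : Junta (insert i Q) h) (hh0 : ∀ y, Aop μ Q h y = 0)
    (J : Finset (Fin k)) : J ⊆ T → Disjoint J Q → ∀ x,
    |Aop μ Q (fun z => h z * Aop μ (Q ∪ J) g z) x| ≤
      ε * Real.sqrt (J.card : ℝ) * (Real.sqrt (Aop μ Q (fun z => h z ^ 2) x) *
        Real.sqrt (Aop μ Q (fun z => (Aop μ (Q ∪ J) g z) ^ 2) x)) := by
  have hμ0 := hμ.1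
  induction J using Finset.induction_on with
  | empty =>
    intro _ _ x
    rw [Finset.union_empty]
    have e1 : Aop μ Q (fun z => h z * Aop μ Q g z) x
        = Aop μ Q (fun z => Aop μ Q g z * h z) x := by
      refine congrFun (congrArg _ ?_) x
      exact funext fun z => mul_comm _ _
    rw [e1, Aop_mul_junta (Aop_junta Q g) h x, hh0 x, mul_zero, abs_zero]
    simp only [Finset.card_empty, Nat.cast_zero, Real.sqrt_zero]
    rw [mul_zero, zero_mul]
  | @insert j J' hjJ' ih =>
    intro hJT hJQ x
    have hjT : j ∈ T := hJT (Finset.mem_insert_self j J')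
    have hJ'T : J' ⊆ T := (Finset.insert_subset_iff.1 hJT).2
    have hJ'Q : Disjoint J' Q := Finset.disjoint_of_subset_left (Finset.subset_insert j J') hJQ
    have hjQ : j ∉ Q := Finset.disjoint_left.1 hJQ (Finset.mem_insert_self j J')
    set P : Finset (Fin k) := Q ∪ J' with hP
    have hQP : Q ⊆ P := Finset.subset_union_left
    have hUI : Q ∪ insert j J' = insert j P := by rw [hP, Finset.union_insert]
    have hiP : i ∉ P := by
      rw [hP, Finset.mem_union]
      rintro (hc | hc)
      · exact hiQ hc
      · exact hiT (hJ'T hc)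
    have hjP : j ∉ P := by
      rw [hP, Finset.mem_union]
      rintro (hc | hc)
      · exact hjQ hc
      · exact hjJ' hc
    have hij : i ≠ j := fun hc => hiT (hc ▸ hjT)
    rw [hUI]
    set G : (∀ i, V i) → ℝ := Aop μ (insert j P) g with hG
    set G' : (∀ i, V i) → ℝ := Aop μ P g with hG'
    set D : (∀ i, V i) → ℝ := fun z => G z - G' z with hD
    have hG'j : Junta P G' := Aop_junta P g
    have hGj : Junta (insert j P) G := Aop_junta (insert j P) g
    have hDj : Junta (insert j P) D :=
      Junta.sub' hGj (junta_mono (Finset.subset_insert j P) hG'j)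
    have hD0 : ∀ y, Aop μ P D y = 0 := by
      intro y
      rw [hD]
      rw [Aop_sub P G G' y, hG, hG',
        Aop_tower hμ0 (Finset.subset_insert j P) g y,
        Aop_tower hμ0 (Finset.Subset.refl P) g y, sub_self]
    -- split h * G
    have hsplit : Aop μ Q (fun z => h z * G z) x
        = Aop μ Q (fun z => h z * G' z) x + Aop μ Q (fun z => h z * D z) x := by
      rw [← Aop_add]
      refine congrFun (congrArg _ (funext fun z => ?_)) x
      rw [hD]; ring
    -- Pythagoras
    have hpyth : Aop μ Q (fun z => G z ^ 2) x
        = Aop μ Q (fun z => G' z ^ 2) x + Aop μ Q (fun z => D z ^ 2) x := by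
      have e : (fun z => G z ^ 2)
          = fun z => G' z ^ 2 + (G' z * (2 * D z) + D z ^ 2) := by
        funext z
        rw [hD]; ring
      rw [e, Aop_add, Aop_add,
        Aop_cross_zero hμ0 hQP hG'j (fun y => by
          rw [Aop_smul P 2 D y, hD0 y, mul_zero]) x]
      ring
    -- step bound
    have hstep : |Aop μ Q (fun z => h z * D z) x| ≤
        ε * Real.sqrt (Aop μ Q (fun z => h z ^ 2) x) *
          Real.sqrt (Aop μ Q (fun z => D z ^ 2) x) :=
      step_pr hμ hε hprod hQP hiP hjP hij
        (junta_mono (Finset.insert_subset_insert i hQP) hh) hDj hD0 x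
    -- combine
    have ihb := ih hJ'T hJ'Q x
    have ha := Real.sqrt_nonneg (Aop μ Q (fun z => h z ^ 2) x)
    have hc2 : Real.sqrt (Aop μ Q (fun z => G' z ^ 2) x) ^ 2
        = Aop μ Q (fun z => G' z ^ 2) x := Real.sq_sqrt (Aop_sq_nonneg hμ0 Q G' x)
    have hd2 : Real.sqrt (Aop μ Q (fun z => D z ^ 2) x) ^ 2
        = Aop μ Q (fun z => D z ^ 2) x := Real.sq_sqrt (Aop_sq_nonneg hμ0 Q D x)
    have H2 := helper_two (Real.sqrt_nonneg ((J'.card : ℕ) : ℝ)) zero_le_one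
      (Real.sqrt_nonneg (Aop μ Q (fun z => G' z ^ 2) x))
      (Real.sqrt_nonneg (Aop μ Q (fun z => D z ^ 2) x))
    rw [Real.sq_sqrt (Nat.cast_nonneg J'.card), one_pow, hc2, hd2, ← hpyth] at H2
    calc |Aop μ Q (fun z => h z * G z) x|
        = |Aop μ Q (fun z => h z * G' z) x + Aop μ Q (fun z => h z * D z) x| := by
          rw [hsplit]
      _ ≤ |Aop μ Q (fun z => h z * G' z) x| + |Aop μ Q (fun z => h z * D z) x| :=
          abs_add_le _ _
      _ ≤ ε * Real.sqrt ((J'.card : ℕ) : ℝ) *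
            (Real.sqrt (Aop μ Q (fun z => h z ^ 2) x) *
              Real.sqrt (Aop μ Q (fun z => G' z ^ 2) x)) +
          ε * Real.sqrt (Aop μ Q (fun z => h z ^ 2) x) *
            Real.sqrt (Aop μ Q (fun z => D z ^ 2) x) := add_le_add ihb hstep
      _ = ε * ((Real.sqrt ((J'.card : ℕ) : ℝ) *
              Real.sqrt (Aop μ Q (fun z => G' z ^ 2) x) +
            1 * Real.sqrt (Aop μ Q (fun z => D z ^ 2) x)) *
              Real.sqrt (Aop μ Q (fun z => h z ^ 2) x)) := by ring
      _ ≤ ε * ((Real.sqrt (((J'.card : ℕ) : ℝ) + 1) *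
              Real.sqrt (Aop μ Q (fun z => G z ^ 2) x)) *
              Real.sqrt (Aop μ Q (fun z => h z ^ 2) x)) := by
          exact mul_le_mul_of_nonneg_left (mul_le_mul_of_nonneg_right H2 ha) hε
      _ = ε * Real.sqrt (((insert j J').card : ℕ) : ℝ) *
            (Real.sqrt (Aop μ Q (fun z => h z ^ 2) x) *
              Real.sqrt (Aop μ Q (fun z => G z ^ 2) x)) := by
          rw [Finset.card_insert_of_notMem hjJ']
          push_cast
          ring

end Lemmas5
section Lemmas6

variable {μ : (∀ i, V i) → ℝ} {ε : ℝ}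

lemma normSq_nonneg (hμ0 : ∀ x, 0 ≤ μ x) (f : (∀ i, V i) → ℝ) : 0 ≤ normSq μ f :=
  Finset.sum_nonneg fun x _ => mul_nonneg (hμ0 x) (sq_nonneg _)

lemma inner'_sub_left (u v g : (∀ i, V i) → ℝ) :
    inner' μ (fun z => u z - v z) g = inner' μ u g - inner' μ v g := by
  unfold inner'
  rw [← Finset.sum_sub_distrib]
  exact Finset.sum_congr rfl fun x _ => by ring

lemma inner'_add_left (u v g : (∀ i, V i) → ℝ) :
    inner' μ (fun z => u z + v z) g = inner' μ u g + inner' μ v g := by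
  unfold inner'
  rw [← Finset.sum_add_distrib]
  exact Finset.sum_congr rfl fun x _ => by ring

lemma normSq_add (u v : (∀ i, V i) → ℝ) :
    normSq μ (fun z => u z + v z)
      = normSq μ u + 2 * inner' μ u v + normSq μ v := by
  unfold normSq inner'
  have e : ∀ x, μ x * (u x + v x) ^ 2
      = μ x * u x ^ 2 + 2 * (μ x * (u x * v x)) + μ x * v x ^ 2 := fun x => by ring
  rw [Finset.sum_congr rfl fun x _ => e x, Finset.sum_add_distrib,
    Finset.sum_add_distrib, ← Finset.mul_sum]

lemma norm_contraction (hμ0 : ∀ x, 0 ≤ μ x) (Q : Finset (Fin k))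
    (f : (∀ i, V i) → ℝ) : normSq μ (Aop μ Q f) ≤ normSq μ f := by
  have h1 : normSq μ (Aop μ Q f) = inner' μ f (Aop μ Q f) := by
    have e1 : normSq μ (Aop μ Q f) = inner' μ (Aop μ Q f) (Aop μ Q f) := by
      unfold normSq inner'
      exact Finset.sum_congr rfl fun x _ => by ring
    rw [e1, inner'_adjoint hμ0]
    unfold inner'
    exact Finset.sum_congr rfl fun x _ => by
      rw [Aop_tower hμ0 (Finset.Subset.refl Q)]
  have h2 : |inner' μ f (Aop μ Q f)| ≤
      Real.sqrt (normSq μ f) * Real.sqrt (normSq μ (Aop μ Q f)) :=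
    helper_cs μ f (Aop μ Q f) hμ0
  have h3 : normSq μ (Aop μ Q f) ≤
      Real.sqrt (normSq μ f) * Real.sqrt (normSq μ (Aop μ Q f)) :=
    h1.trans_le ((le_abs_self _).trans h2)
  have hn := normSq_nonneg hμ0 (Aop μ Q f)
  have hm := normSq_nonneg hμ0 f
  nlinarith [Real.sq_sqrt hn, Real.sq_sqrt hm, Real.sqrt_nonneg (normSq μ (Aop μ Q f)),
    Real.sqrt_nonneg (normSq μ f)]

lemma outer_step (hμ : IsProb μ) (hε : 0 ≤ ε) (hprod : EpsProduct μ ε)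
    {Q T : Finset (Fin k)} {i : Fin k} (hiQ : i ∉ Q) (hiT : i ∉ T)
    {f g : (∀ i, V i) → ℝ} (hg : Junta T g) :
    |inner' μ (fun z => Aop μ (insert i Q) f z - Aop μ Q f z) g| ≤
      ε * Real.sqrt ((T.card : ℕ) : ℝ) *
        (Real.sqrt (normSq μ (fun z => Aop μ (insert i Q) f z - Aop μ Q f z)) *
          Real.sqrt (normSq μ g)) := by
  have hμ0 := hμ.1
  set h : (∀ i, V i) → ℝ := fun z => Aop μ (insert i Q) f z - Aop μ Q f z with hhdef
  have hhj : Junta (insert i Q) h :=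
    Junta.sub' (Aop_junta _ f)
      (junta_mono (Finset.subset_insert i Q) (Aop_junta Q f))
  have hh0 : ∀ y, Aop μ Q h y = 0 := by
    intro y
    rw [hhdef, Aop_sub, Aop_tower hμ0 (Finset.subset_insert i Q),
      Aop_tower hμ0 (Finset.Subset.refl Q), sub_self]
  have hgQT : Junta (Q ∪ T) g := junta_mono Finset.subset_union_right hg
  have px : ∀ x, |Aop μ Q (fun z => h z * g z) x| ≤
      ε * Real.sqrt ((T.card : ℕ) : ℝ) *
        (Real.sqrt (Aop μ Q (fun z => h z ^ 2) x) *
          Real.sqrt (Aop μ Q (fun z => g z ^ 2) x)) := by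
    intro x
    have hsupp : ∀ z, cond μ Q x z ≠ 0 → g z = Aop μ (Q ∪ T \ Q) g z := by
      intro z hz
      have hmu : μ z ≠ 0 := mu_ne_zero_of_cond hz
      have hmarg : marg μ (Q ∪ T) z ≠ 0 := fun hc =>
        hmu (le_antisymm (hc ▸ le_marg hμ0 fun l _ => rfl) (hμ0 z))
      rw [Finset.union_sdiff_self_eq_union]
      exact (Aop_eq_of_junta hgQT hmarg).symm
    have e1 : Aop μ Q (fun z => h z * g z) x
        = Aop μ Q (fun z => h z * Aop μ (Q ∪ T \ Q) g z) x :=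
      Aop_congr_support fun z hz => by rw [← hsupp z hz]
    have e2 : Aop μ Q (fun z => (Aop μ (Q ∪ T \ Q) g z) ^ 2) x
        = Aop μ Q (fun z => g z ^ 2) x :=
      Aop_congr_support fun z hz => by rw [← hsupp z hz]
    rw [e1]
    have key := inner_tel (g := g) hμ hε hprod hiQ hiT hhj hh0 (T \ Q)
      Finset.sdiff_subset Finset.sdiff_disjoint x
    refine key.trans ?_
    rw [e2]
    have hcard : (((T \ Q).card : ℕ) : ℝ) ≤ ((T.card : ℕ) : ℝ) :=
      Nat.cast_le.2 (Finset.card_le_card Finset.sdiff_subset)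
    refine mul_le_mul_of_nonneg_right
      (mul_le_mul_of_nonneg_left (Real.sqrt_le_sqrt hcard) hε) ?_
    exact mul_nonneg (Real.sqrt_nonneg _) (Real.sqrt_nonneg _)
  have e0 : inner' μ h g = ∑ x, μ x * Aop μ Q (fun z => h z * g z) x := by
    rw [sum_mu_Aop hμ0 Q (fun z => h z * g z)]
    rfl
  rw [e0]
  calc |∑ x, μ x * Aop μ Q (fun z => h z * g z) x|
      ≤ ∑ x, |μ x * Aop μ Q (fun z => h z * g z) x| := Finset.abs_sum_le_sum_abs _ _
    _ ≤ ∑ x, μ x * (ε * Real.sqrt ((T.card : ℕ) : ℝ) *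
          (Real.sqrt (Aop μ Q (fun z => h z ^ 2) x) *
            Real.sqrt (Aop μ Q (fun z => g z ^ 2) x))) := by
        refine Finset.sum_le_sum fun x _ => ?_
        rw [abs_mul, abs_of_nonneg (hμ0 x)]
        exact mul_le_mul_of_nonneg_left (px x) (hμ0 x)
    _ = ε * Real.sqrt ((T.card : ℕ) : ℝ) *
          ∑ x, μ x * (Real.sqrt (Aop μ Q (fun z => h z ^ 2) x) *
            Real.sqrt (Aop μ Q (fun z => g z ^ 2) x)) := by
        rw [Finset.mul_sum]
        exact Finset.sum_congr rfl fun x _ => by ring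
    _ ≤ ε * Real.sqrt ((T.card : ℕ) : ℝ) *
          (Real.sqrt (∑ x, μ x * Aop μ Q (fun z => h z ^ 2) x) *
            Real.sqrt (∑ x, μ x * Aop μ Q (fun z => g z ^ 2) x)) := by
        refine mul_le_mul_of_nonneg_left ?_
          (mul_nonneg hε (Real.sqrt_nonneg _))
        exact helper_cs_sqrt μ _ _ hμ0 (fun x => Aop_sq_nonneg hμ0 Q h x)
          (fun x => Aop_sq_nonneg hμ0 Q g x)
    _ = ε * Real.sqrt ((T.card : ℕ) : ℝ) *
          (Real.sqrt (normSq μ h) * Real.sqrt (normSq μ g)) := by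
        rw [sum_mu_Aop hμ0 Q (fun z => h z ^ 2), sum_mu_Aop hμ0 Q (fun z => g z ^ 2)]
        rfl

end Lemmas6
section Lemmas7

variable {μ : (∀ i, V i) → ℝ} {ε : ℝ}

lemma outer_tel (hμ : IsProb μ) (hε : 0 ≤ ε) (hprod : EpsProduct μ ε)
    {Q T : Finset (Fin k)} {f g : (∀ i, V i) → ℝ} (hg : Junta T g)
    (D : Finset (Fin k)) : Disjoint D T → Disjoint D Q →
    |inner' μ (fun z => Aop μ (Q ∪ D) f z - Aop μ Q f z) g| ≤
      ε * Real.sqrt (((D.card : ℕ) : ℝ) * ((T.card : ℕ) : ℝ)) *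
        (Real.sqrt (normSq μ (fun z => Aop μ (Q ∪ D) f z - Aop μ Q f z)) *
          Real.sqrt (normSq μ g)) := by
  have hμ0 := hμ.1
  induction D using Finset.induction_on with
  | empty =>
    intro _ _
    rw [Finset.union_empty]
    have e : inner' μ (fun z => Aop μ Q f z - Aop μ Q f z) g = 0 := by
      unfold inner'
      exact Finset.sum_eq_zero fun x _ => by show μ x * ((Aop μ Q f x - Aop μ Q f x) * g x) = 0; rw [sub_self]; ring
    rw [e, abs_zero, Finset.card_empty]
    have : Real.sqrt ((((0:ℕ)) : ℝ) * ((T.card : ℕ) : ℝ)) = 0 := by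
      rw [Nat.cast_zero, zero_mul, Real.sqrt_zero]
    rw [this, mul_zero, zero_mul]
  | @insert l D' hlD' ih =>
    intro hDT hDQ
    have hlT : l ∉ T := Finset.disjoint_left.1 hDT (Finset.mem_insert_self l D')
    have hlQ : l ∉ Q := Finset.disjoint_left.1 hDQ (Finset.mem_insert_self l D')
    have hD'T : Disjoint D' T :=
      Finset.disjoint_of_subset_left (Finset.subset_insert l D') hDT
    have hD'Q : Disjoint D' Q :=
      Finset.disjoint_of_subset_left (Finset.subset_insert l D') hDQ
    set P : Finset (Fin k) := Q ∪ D' with hP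
    have hQP : Q ⊆ P := Finset.subset_union_left
    have hlP : l ∉ P := by
      rw [hP, Finset.mem_union]
      rintro (hc | hc)
      · exact hlQ hc
      · exact hlD' hc
    have hUI : Q ∪ insert l D' = insert l P := by rw [hP, Finset.union_insert]
    rw [hUI]
    set a : (∀ i, V i) → ℝ := fun z => Aop μ (insert l P) f z - Aop μ P f z with hadef
    set b : (∀ i, V i) → ℝ := fun z => Aop μ P f z - Aop μ Q f z with hbdef
    have htot : (fun z => Aop μ (insert l P) f z - Aop μ Q f z)
        = fun z => a z + b z := by
      funext z
      rw [hadef, hbdef]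
      ring
    have hA : ∀ R : Finset (Fin k), R ⊆ P → ∀ y, Aop μ R a y = 0 := by
      intro R hR y
      rw [hadef, Aop_sub, Aop_tower hμ0 (hR.trans (Finset.subset_insert l P)),
        Aop_tower hμ0 hR, sub_self]
    have crossP : inner' μ (Aop μ P f) a = 0 := by
      rw [inner'_adjoint hμ0]
      unfold inner'
      exact Finset.sum_eq_zero fun x _ => by
        rw [hA P (Finset.Subset.refl P) x]; ring
    have crossQ : inner' μ (Aop μ Q f) a = 0 := by
      rw [inner'_adjoint hμ0]
      unfold inner'
      exact Finset.sum_eq_zero fun x _ => by rw [hA Q hQP x]; ring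
    have cross : inner' μ b a = 0 := by
      rw [hbdef, inner'_sub_left, crossP, crossQ, sub_self]
    have hpyth : normSq μ (fun z => a z + b z) = normSq μ a + normSq μ b := by
      rw [normSq_add]
      have : inner' μ a b = inner' μ b a := by
        unfold inner'
        exact Finset.sum_congr rfl fun x _ => by ring
      rw [this, cross]
      ring
    have bnda := outer_step hμ hε hprod hlP hlT hg (f := f)
    have bndb := ih hD'T hD'Q
    rw [htot]
    have split : inner' μ (fun z => a z + b z) g = inner' μ a g + inner' μ b g :=
      inner'_add_left a b g
    -- numeric combination
    set α := Real.sqrt (normSq μ a) with hα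
    set β := Real.sqrt (normSq μ b) with hβ
    set G := Real.sqrt (normSq μ g) with hG
    set t := Real.sqrt ((T.card : ℕ) : ℝ) with ht
    set d' := Real.sqrt ((D'.card : ℕ) : ℝ) with hd'
    have hα0 : 0 ≤ α := Real.sqrt_nonneg _
    have hβ0 : 0 ≤ β := Real.sqrt_nonneg _
    have hG0 : 0 ≤ G := Real.sqrt_nonneg _
    have ht0 : 0 ≤ t := Real.sqrt_nonneg _
    have hd'0 : 0 ≤ d' := Real.sqrt_nonneg _
    have hsm : Real.sqrt (((D'.card : ℕ) : ℝ) * ((T.card : ℕ) : ℝ)) = d' * t :=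
      Real.sqrt_mul (Nat.cast_nonneg _) _
    rw [hsm] at bndb
    have htwo : 1 * α + d' * β ≤
        Real.sqrt (1 + ((D'.card : ℕ) : ℝ)) * Real.sqrt (α ^ 2 + β ^ 2) := by
      have h2 := helper_two zero_le_one hd'0 hα0 hβ0
      rw [one_pow, hd', Real.sq_sqrt (Nat.cast_nonneg _)] at h2
      exact h2
    have hab : α ^ 2 + β ^ 2 = normSq μ (fun z => a z + b z) := by
      rw [hα, hβ, Real.sq_sqrt (normSq_nonneg hμ0 a),
        Real.sq_sqrt (normSq_nonneg hμ0 b), hpyth]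
    calc |inner' μ (fun z => a z + b z) g|
        ≤ |inner' μ a g| + |inner' μ b g| := by rw [split]; exact abs_add_le _ _
      _ ≤ ε * t * (α * G) + ε * (d' * t) * (β * G) := add_le_add bnda bndb
      _ = ε * t * G * (1 * α + d' * β) := by ring
      _ ≤ ε * t * G * (Real.sqrt (1 + ((D'.card : ℕ) : ℝ)) *
            Real.sqrt (α ^ 2 + β ^ 2)) := by
          refine mul_le_mul_of_nonneg_left htwo ?_
          exact mul_nonneg (mul_nonneg hε ht0) hG0
      _ = ε * Real.sqrt ((((insert l D').card : ℕ) : ℝ) * ((T.card : ℕ) : ℝ)) *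
            (Real.sqrt (normSq μ (fun z => a z + b z)) * G) := by
          rw [hab, Finset.card_insert_of_notMem hlD']
          rw [Nat.cast_add, Nat.cast_one, Real.sqrt_mul (by positivity), ht]
          rw [show ((D'.card : ℝ) + 1) = 1 + ((D'.card : ℕ) : ℝ) from by ring]
          ring

lemma claimB (hμ : IsProb μ) (hε : 0 ≤ ε) (hprod : EpsProduct μ ε)
    {S T R : Finset (Fin k)} (hR : R ⊆ S) {f g : (∀ i, V i) → ℝ} (hg : Junta T g) :
    |inner' μ (Aop μ R f) g - inner' μ (Aop μ (R ∩ T) f) g| ≤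
      ε * Real.sqrt (((S.card : ℕ) : ℝ) * ((T.card : ℕ) : ℝ)) *
        (l2norm μ f * l2norm μ g) := by
  have hμ0 := hμ.1
  have hRdec : R ∩ T ∪ R \ T = R := by
    rw [Finset.union_comm, Finset.sdiff_union_inter]
  have key := outer_tel (Q := R ∩ T) (f := f) hμ hε hprod hg (R \ T)
    Finset.sdiff_disjoint (Finset.disjoint_sdiff_inter R T)
  rw [hRdec] at key
  rw [← inner'_sub_left]
  have e : inner' μ (fun z => Aop μ R f z - Aop μ (R ∩ T) f z) g
      = inner' μ (fun z => (fun w => Aop μ R f w) z - (fun w => Aop μ (R ∩ T) f w) z) g := rfl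
  refine (key.trans ?_)
  have hc1 : (((R \ T).card : ℕ) : ℝ) * ((T.card : ℕ) : ℝ)
      ≤ ((S.card : ℕ) : ℝ) * ((T.card : ℕ) : ℝ) := by
    have : (R \ T).card ≤ S.card :=
      Finset.card_le_card (Finset.sdiff_subset.trans hR)
    exact mul_le_mul_of_nonneg_right (Nat.cast_le.2 this) (Nat.cast_nonneg _)
  have hn1 : normSq μ (fun z => Aop μ R f z - Aop μ (R ∩ T) f z) ≤ normSq μ f := by
    have hp : normSq μ (fun z => Aop μ R f z - Aop μ (R ∩ T) f z)
        = normSq μ (Aop μ R f) - normSq μ (Aop μ (R ∩ T) f) := by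
      have expand : normSq μ (Aop μ R f) = normSq μ (fun z =>
          (Aop μ R f z - Aop μ (R ∩ T) f z) + Aop μ (R ∩ T) f z) := by
        refine congrArg _ (funext fun z => ?_)
        ring
      rw [expand, normSq_add]
      have hIT : R ∩ T ⊆ R := Finset.inter_subset_left
      have hA0 : ∀ y, Aop μ (R ∩ T)
          (fun z => Aop μ R f z - Aop μ (R ∩ T) f z) y = 0 := by
        intro y
        rw [Aop_sub, Aop_tower hμ0 hIT, Aop_tower hμ0 (Finset.Subset.refl _),
          sub_self]
      have cr : inner' μ (fun z => Aop μ R f z - Aop μ (R ∩ T) f z)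
          (Aop μ (R ∩ T) f) = 0 := by
        have sym : inner' μ (fun z => Aop μ R f z - Aop μ (R ∩ T) f z)
            (Aop μ (R ∩ T) f) = inner' μ (Aop μ (R ∩ T) f)
              (fun z => Aop μ R f z - Aop μ (R ∩ T) f z) := by
          unfold inner'
          exact Finset.sum_congr rfl fun x _ => by ring
        rw [sym, inner'_adjoint hμ0]
        unfold inner'
        exact Finset.sum_eq_zero fun x _ => by rw [hA0 x]; ring
      rw [cr]
      ring
    rw [hp]
    have := norm_contraction hμ0 R f
    have := normSq_nonneg hμ0 (Aop μ (R ∩ T) f)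
    linarith
  have sq1 : Real.sqrt (normSq μ (fun z => Aop μ R f z - Aop μ (R ∩ T) f z))
      ≤ l2norm μ f := Real.sqrt_le_sqrt hn1
  refine mul_le_mul ?_ ?_ ?_ ?_
  · exact mul_le_mul_of_nonneg_left (Real.sqrt_le_sqrt hc1) hε
  · unfold l2norm
    exact mul_le_mul_of_nonneg_right sq1 (Real.sqrt_nonneg _)
  · exact mul_nonneg (Real.sqrt_nonneg _) (Real.sqrt_nonneg _)
  · exact mul_nonneg hε (Real.sqrt_nonneg _)

end Lemmas7
section Lemmas8

lemma cancel_sum (S T : Finset (Fin k)) {i : Fin k} (hiS : i ∈ S) (hiT : i ∉ T)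
    (c : Finset (Fin k) → ℝ) :
    ∑ R ∈ S.powerset, (-1 : ℝ) ^ (S.card - R.card) * c (R ∩ T) = 0 := by
  have hS : insert i (S.erase i) = S := Finset.insert_erase hiS
  have hni : i ∉ S.erase i := Finset.notMem_erase i S
  rw [← hS, Finset.sum_powerset_insert hni, ← Finset.sum_add_distrib]
  refine Finset.sum_eq_zero fun R hR => ?_
  have hRs : R ⊆ S.erase i := Finset.mem_powerset.1 hR
  have hiR : i ∉ R := fun hc => hni (hRs hc)
  have hcard : R.card + 1 ≤ (insert i (S.erase i)).card := by
    rw [Finset.card_insert_of_notMem hni]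
    have := Finset.card_le_card hRs
    omega
  have hinter : insert i R ∩ T = R ∩ T := Finset.insert_inter_of_notMem hiT
  have hic : (insert i R).card = R.card + 1 := Finset.card_insert_of_notMem hiR
  rw [hinter, hic]
  have hexp : (insert i (S.erase i)).card - R.card
      = ((insert i (S.erase i)).card - (R.card + 1)) + 1 := by omega
  rw [hexp, pow_succ]
  ring

end Lemmas8
theorem statement13 (k : ℕ) (hk : 1 ≤ k)
    (V : Fin k → Type) [∀ i, Fintype (V i)] [∀ i, DecidableEq (V i)]
    (μ : (∀ i, V i) → ℝ) (ε : ℝ) (hε : 0 ≤ ε) (hμ : IsProb μ) (hprod : EpsProduct μ ε)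
    (S T : Finset (Fin k)) (hST : ¬ S ⊆ T)
    (f g : (∀ i, V i) → ℝ) (hg : Junta T g) :
    inner' μ (ES μ S f) g ≤
      ε * Real.sqrt ((S.card : ℝ) * T.card) * 2 ^ S.card * l2norm μ f * l2norm μ g := by
  obtain ⟨i, hiS, hiT⟩ := Finset.not_subset.1 hST
  have keyES : inner' μ (ES μ S f) g = ∑ R ∈ S.powerset,
      (-1 : ℝ) ^ (S.card - R.card) * inner' μ (Aop μ R f) g := by
    unfold inner' ES
    simp only [Finset.sum_mul, Finset.mul_sum]
    rw [Finset.sum_comm]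
    exact Finset.sum_congr rfl fun R _ => Finset.sum_congr rfl fun x _ => by ring
  have zero := cancel_sum S T hiS hiT (fun U => inner' μ (Aop μ U f) g)
  have bound : ∀ R ∈ S.powerset,
      |inner' μ (Aop μ R f) g - inner' μ (Aop μ (R ∩ T) f) g| ≤
        ε * Real.sqrt (((S.card : ℕ) : ℝ) * ((T.card : ℕ) : ℝ)) *
          (l2norm μ f * l2norm μ g) := fun R hR =>
    claimB hμ hε hprod (Finset.mem_powerset.1 hR) hg
  calc inner' μ (ES μ S f) g
      = (∑ R ∈ S.powerset, (-1 : ℝ) ^ (S.card - R.card) * inner' μ (Aop μ R f) g)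
        - ∑ R ∈ S.powerset, (-1 : ℝ) ^ (S.card - R.card) *
            inner' μ (Aop μ (R ∩ T) f) g := by
        rw [keyES, zero, sub_zero]
    _ = ∑ R ∈ S.powerset, (-1 : ℝ) ^ (S.card - R.card) *
          (inner' μ (Aop μ R f) g - inner' μ (Aop μ (R ∩ T) f) g) := by
        rw [← Finset.sum_sub_distrib]
        exact Finset.sum_congr rfl fun R _ => by ring
    _ ≤ ∑ R ∈ S.powerset, |(-1 : ℝ) ^ (S.card - R.card) *
          (inner' μ (Aop μ R f) g - inner' μ (Aop μ (R ∩ T) f) g)| :=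
        Finset.sum_le_sum fun R _ => le_abs_self _
    _ = ∑ R ∈ S.powerset,
          |inner' μ (Aop μ R f) g - inner' μ (Aop μ (R ∩ T) f) g| := by
        refine Finset.sum_congr rfl fun R _ => ?_
        rw [abs_mul, abs_pow, abs_neg, abs_one, one_pow, one_mul]
    _ ≤ ∑ _R ∈ S.powerset, ε * Real.sqrt (((S.card : ℕ) : ℝ) * ((T.card : ℕ) : ℝ)) *
          (l2norm μ f * l2norm μ g) := Finset.sum_le_sum bound
    _ = ε * Real.sqrt ((S.card : ℝ) * T.card) * 2 ^ S.card * l2norm μ f * l2norm μ g := by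
        rw [Finset.sum_const, Finset.card_powerset, nsmul_eq_mul]
        push_cast
        ring

end GLL
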